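/- Let Q be a nonzero nilpotent bounded operator on a complex Banach space X with Q^{n+1} = 0 and Q^n ≠ 0. Then for every z ≠ 0, sup_{j} (j+1)^{1/2} ‖zQ(I + zQ)^j‖ = ∞; i.e., the Tauberian set T_Q^{1/2} equals {0}. -/
import Mathlib


theorem nilpotent_tauberianHalfSet_eq_zero
    {X : Type*} [NormedAddCommGroup X] [NormedSpace ℂ X] [CompleteSpace X]
    (Q : X →L[ℂ] X) (n : ℕ) (hn : 1 ≤ n)
    (hnil : Q ^ (n + 1) = 0) (hne : Q ^ n ≠ 0) :
    {z : ℂ | ∃ N : ℝ, ∀ j : ℕ,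
        Real.sqrt (j + 1) * ‖(z • Q) * (1 + z • Q) ^ j‖ ≤ N} = {0} := by
  ext z
  simp only [Set.mem_setOf_eq, Set.mem_singleton_iff]
  constructor
  · rintro ⟨N, hN⟩
    by_contra hz
    set S : X →L[ℂ] X := z • Q with hS
    -- Step 1: S (1+S)^j → 0
    have hsqrt : Filter.Tendsto (fun j : ℕ => Real.sqrt (j + 1)) Filter.atTop Filter.atTop := by
      apply Filter.tendsto_atTop_atTop.2
      intro b
      refine ⟨⌈b ^ 2⌉₊, fun j hj => ?_⟩
      have h1 : b ^ 2 ≤ (j : ℝ) + 1 := by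
        calc b ^ 2 ≤ (⌈b ^ 2⌉₊ : ℝ) := Nat.le_ceil _
          _ ≤ (j : ℝ) := Nat.cast_le.2 hj
          _ ≤ (j : ℝ) + 1 := by linarith
      calc b ≤ |b| := le_abs_self b
        _ = Real.sqrt (b ^ 2) := (Real.sqrt_sq_eq_abs b).symm
        _ ≤ Real.sqrt ((j : ℝ) + 1) := Real.sqrt_le_sqrt h1
    have h0 : Filter.Tendsto (fun j : ℕ => S * (1 + S) ^ j) Filter.atTop (nhds 0) := by
      rw [tendsto_zero_iff_norm_tendsto_zero]
      refine squeeze_zero (g := fun j : ℕ => N * (Real.sqrt ((j : ℝ) + 1))⁻¹)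
        (fun j => norm_nonneg _) (fun j => ?_) ?_
      · have hpos : 0 < Real.sqrt ((j : ℝ) + 1) := Real.sqrt_pos.2 (by positivity)
        show ‖S * (1 + S) ^ j‖ ≤ N * (Real.sqrt ((j : ℝ) + 1))⁻¹
        rw [mul_comm, inv_mul_eq_div, le_div_iff₀ hpos, mul_comm]
        exact hN j
      · simpa using (hsqrt.inv_tendsto_atTop).const_mul N
    -- Step 2: for all m, S^(m+1) (1+S)^j → 0 as j → ∞
    have h1 : ∀ m : ℕ, Filter.Tendsto (fun j : ℕ => S ^ (m + 1) * (1 + S) ^ j)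
        Filter.atTop (nhds 0) := by
      intro m
      induction m with
      | zero => simpa using h0
      | succ m ih =>
        have hc : ∀ j : ℕ, Commute S ((1 + S) ^ j) :=
          fun j => (((Commute.one_right S).add_right (Commute.refl S)).pow_right j)
        have key : ∀ j : ℕ, S ^ (m + 2) * (1 + S) ^ j
            = S ^ (m + 1) * (1 + S) ^ (j + 1) - S ^ (m + 1) * (1 + S) ^ j := by
          intro j
          rw [pow_succ (1 + S) j, ← mul_assoc, mul_add, mul_one, add_sub_cancel_left,
            mul_assoc, ← (hc j).eq, ← mul_assoc, ← pow_succ]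
        have h2' := (ih.comp (Filter.tendsto_add_atTop_nat 1)).sub ih
        simp only [Function.comp] at h2'
        rw [sub_zero] at h2'
        convert h2' using 2 with j
        exact key j
    -- Step 3: S^n (1+S)^j is the constant z^n • Q^n
    have h2 : ∀ j : ℕ, S ^ n * (1 + S) ^ j = z ^ n • Q ^ n := by
      have hq : Q ^ n * (1 + S) = Q ^ n := by
        rw [mul_add, mul_one, hS, mul_smul_comm, ← pow_succ, hnil, smul_zero, add_zero]
      intro j
      have hq' : Q ^ n * (1 + S) ^ j = Q ^ n := by
        induction j with
        | zero => simp
        | succ j ih => rw [pow_succ, ← mul_assoc, ih, hq]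
      rw [hS, smul_pow, smul_mul_assoc, hq']
    -- Conclude
    obtain ⟨m, rfl⟩ : ∃ m, n = m + 1 := ⟨n - 1, (Nat.succ_pred_eq_of_pos hn).symm⟩
    have hconst : Filter.Tendsto (fun _ : ℕ => z ^ (m + 1) • Q ^ (m + 1))
        Filter.atTop (nhds (z ^ (m + 1) • Q ^ (m + 1))) := tendsto_const_nhds
    have heq : z ^ (m + 1) • Q ^ (m + 1) = 0 := by
      have := h1 m
      simp only [h2] at this
      exact tendsto_nhds_unique hconst this
    rcases smul_eq_zero.1 heq with h | h
    · exact pow_ne_zero _ hz h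
    · exact hne h
  · rintro rfl
    exact ⟨0, fun j => by simp⟩
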